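/- Under the augmented posterior p(z_{1:K}, ℓ | x), the marginal distribution of z_ℓ (the selected coordinate) is the posterior p(z|x) = p(x,z)/p(x). -/

import Mathlib

open MeasureTheory

/-- Under the augmented posterior
`p(z_{1:K}, ℓ | x) = (1/(K p(x))) p(x, z_ℓ) ∏_{k≠ℓ} q(z_k|x)`, the marginal
distribution of the selected coordinate `z_ℓ` is the posterior `p(z|x) = p(x,z)/p(x)`:
for any bounded measurable `h`, `E[h(z_ℓ)] = E_{p(z|x)}[h(z)]`. -/
theorem augmented_posterior_selected_marginal {α : Type*} [MeasurableSpace α]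
    (μ : Measure α) [SigmaFinite μ]
    (K : ℕ) (hK : 1 ≤ K) (p q h : α → ℝ)
    (hp0 : ∀ z, 0 ≤ p z) (hq0 : ∀ z, 0 ≤ q z)
    (hpm : Measurable p) (hqm : Measurable q) (hhm : Measurable h)
    (C : ℝ) (hhb : ∀ y, |h y| ≤ C)
    (hq1 : ∫ z, q z ∂μ = 1) (hqint : Integrable q μ) (hpint : Integrable p μ)
    (px : ℝ) (hpx : ∫ z, p z ∂μ = px) (hpx0 : 0 < px) :
    ∑ ℓ : Fin K, ∫ z : Fin K → α,
        h (z ℓ) * ((1 / ((K : ℝ) * px)) * p (z ℓ) * ∏ k ∈ Finset.univ \ {ℓ}, q (z k))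
        ∂(Measure.pi fun _ => μ)
      = ∫ y, h y * (p y / px) ∂μ := by
  letI : MeasureSpace α := ⟨μ⟩
  have key : ∀ ℓ : Fin K,
      (∫ z : Fin K → α,
        h (z ℓ) * ((1 / ((K : ℝ) * px)) * p (z ℓ) * ∏ k ∈ Finset.univ \ {ℓ}, q (z k))
        ∂(Measure.pi fun _ => μ))
      = (1 / ((K : ℝ) * px)) * ∫ y, h y * p y ∂μ := by
    intro ℓ
    set f : Fin K → α → ℝ := fun k y =>
      if k = ℓ then h y * ((1 / ((K : ℝ) * px)) * p y) else q y with hf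
    have hside : ∀ g : α → ℝ, ∀ k ∈ Finset.univ \ {ℓ}, (∀ y, f k y = q y) := by
      intro g k hk y
      simp only [Finset.mem_sdiff, Finset.mem_singleton] at hk
      simp [hf, hk.2]
    have hrw : ∀ z : Fin K → α,
        h (z ℓ) * ((1 / ((K : ℝ) * px)) * p (z ℓ) * ∏ k ∈ Finset.univ \ {ℓ}, q (z k))
        = ∏ k, f k (z k) := by
      intro z
      rw [← Finset.prod_sdiff (Finset.subset_univ {ℓ}), Finset.prod_singleton,
        Finset.prod_congr rfl (fun k hk => hside q k hk (z k))]
      simp only [hf, if_pos rfl]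
      ring
    have hmp : (Measure.pi fun _ : Fin K => μ) = (volume : Measure (Fin K → α)) := rfl
    calc (∫ z : Fin K → α,
        h (z ℓ) * ((1 / ((K : ℝ) * px)) * p (z ℓ) * ∏ k ∈ Finset.univ \ {ℓ}, q (z k))
        ∂(Measure.pi fun _ => μ))
        = ∫ z : Fin K → α, ∏ k, f k (z k) := by
          rw [hmp]; exact integral_congr_ae (Filter.Eventually.of_forall hrw)
      _ = ∏ k, ∫ y, f k y := integral_fintype_prod_eq_prod f
      _ = (1 / ((K : ℝ) * px)) * ∫ y, h y * p y ∂μ := by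
          rw [← Finset.prod_sdiff (Finset.subset_univ {ℓ}), Finset.prod_singleton,
            Finset.prod_congr rfl (fun k hk => by
              rw [integral_congr_ae (Filter.Eventually.of_forall (hside q k hk))]),
            Finset.prod_const]
          have h1 : (∫ y, q y) = 1 := hq1
          rw [h1, one_pow, one_mul]
          have h2 : (∫ y, f ℓ y) = ∫ y, h y * ((1 / ((K : ℝ) * px)) * p y) := by
            apply integral_congr_ae (Filter.Eventually.of_forall _)
            intro y; simp [hf]
          rw [h2, ← integral_const_mul]
          congr 1; ext y; ring
  rw [Finset.sum_congr rfl (fun ℓ _ => key ℓ), Finset.sum_const, Finset.card_univ,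
    Fintype.card_fin, nsmul_eq_mul]
  have hKpos : (0 : ℝ) < K := by exact_mod_cast Nat.lt_of_lt_of_le Nat.zero_lt_one hK
  have h3 : (∫ y, h y * (p y / px) ∂μ) = (1 / px) * ∫ y, h y * p y ∂μ := by
    rw [← integral_const_mul]
    congr 1; ext y; ring
  rw [h3]
  field_simp
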